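/- Let X and Y be Polish spaces and let γ be a probability measure on X × Y with marginals μ on X and ν on Y. If the cost function c on X × Y is bounded by marginal costs c_X and c_Y in the sense that c_X(x₁,x₂) ≥ sup_{y ∈ Y} c(x₁,y,x₂,y) and c_Y(y₁,y₂) ≥ sup_{x ∈ X} c(x,y₁,x,y₂) for all x₁,x₂ ∈ X and y₁,y₂ ∈ Y, then the transport dependency satisfies τ_c(γ) ≤ diam_{c_Y} ν, and by symmetry also τ_c(γ) ≤ diam_{c_X} μ. -/

import Mathlib

open MeasureTheory ENNReal Filter Topology

/-- The optimal transport cost between two measures `μ` and `ν` on a space `Z`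
with base cost `c`. -/
noncomputable def otCost {Z : Type*} [MeasurableSpace Z]
    (c : Z → Z → ℝ≥0∞) (μ ν : Measure Z) : ℝ≥0∞ :=
  ⨅ (π : Measure (Z × Z)) (_ : π.map Prod.fst = μ ∧ π.map Prod.snd = ν),
    ∫⁻ p, c p.1 p.2 ∂π

/-- The transport dependency of a measure `γ` on `X × Y`. -/
noncomputable def tdep {X Y : Type*} [MeasurableSpace X] [MeasurableSpace Y]
    (c : X × Y → X × Y → ℝ≥0∞) (γ : Measure (X × Y)) : ℝ≥0∞ :=
  otCost c γ ((γ.map Prod.fst).prod (γ.map Prod.snd))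

/-- The `c`-diameter of a measure `μ`: `diam_c μ = ∫∫ c dμ dμ`. -/
noncomputable def diamC {Z : Type*} [MeasurableSpace Z]
    (c : Z → Z → ℝ≥0∞) (μ : Measure Z) : ℝ≥0∞ :=
  ∫⁻ z₁, ∫⁻ z₂, c z₁ z₂ ∂μ ∂μ

/-- If the cost `c` on `X × Y` is bounded on vertical and horizontal
fibers by marginal costs `c_X` and `c_Y`, then the transport dependency is bounded by
the `c_Y`-diameter of the second marginal, and symmetrically by the `c_X`-diameter of
the first marginal. -/
lemma auxY {X Y : Type*} [MeasurableSpace X] [MeasurableSpace Y]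
    (c : X × Y → X × Y → ℝ≥0∞)
    (hc : Measurable (Function.uncurry c))
    (cY : Y → Y → ℝ≥0∞) (dY : Y → Y → ℝ≥0∞)
    (hdY : Measurable (Function.uncurry dY))
    (hle : ∀ x y₁ y₂, c (x, y₁) (x, y₂) ≤ dY y₁ y₂)
    (hle' : ∀ y₁ y₂, dY y₁ y₂ ≤ cY y₁ y₂)
    (γ : Measure (X × Y)) [IsProbabilityMeasure γ] :
    tdep c γ ≤ diamC cY (γ.map Prod.snd) := by
  set ν : Measure Y := γ.map Prod.snd with hν
  have hνf : ν = γ.snd := rfl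
  have : IsProbabilityMeasure ν := by rw [hνf]; infer_instance
  set T : (X × Y) × Y → (X × Y) × (X × Y) := fun q => (q.1, (q.1.1, q.2)) with hT
  have hTm : Measurable T :=
    measurable_fst.prodMk ((measurable_fst.comp measurable_fst).prodMk measurable_snd)
  set π : Measure ((X × Y) × (X × Y)) := (γ.prod ν).map T with hπ
  have h1 : π.map Prod.fst = γ := by
    rw [hπ, Measure.map_map measurable_fst hTm]
    have : (Prod.fst ∘ T) = (Prod.fst : (X × Y) × Y → X × Y) := rfl
    rw [this]
    exact Measure.fst_prod
  have h2 : π.map Prod.snd = (γ.map Prod.fst).prod (γ.map Prod.snd) := by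
    rw [hπ, Measure.map_map measurable_snd hTm]
    have : (Prod.snd ∘ T) = Prod.map (Prod.fst : X × Y → X) (id : Y → Y) := rfl
    rw [this, ← Measure.map_prod_map _ _ measurable_fst measurable_id, Measure.map_id]
  have key : tdep c γ ≤ ∫⁻ p, c p.1 p.2 ∂π := by
    rw [tdep, otCost]
    exact iInf_le_of_le π (iInf_le _ ⟨h1, h2⟩)
  refine key.trans ?_
  have hc' : Measurable fun p : (X × Y) × (X × Y) => c p.1 p.2 := hc
  rw [hπ, lintegral_map hc' hTm]
  calc ∫⁻ q, c (T q).1 (T q).2 ∂(γ.prod ν)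
      ≤ ∫⁻ q : (X × Y) × Y, dY q.1.2 q.2 ∂(γ.prod ν) := by
        refine lintegral_mono fun q => ?_
        exact hle q.1.1 q.1.2 q.2
    _ = ∫⁻ p : Y × Y, dY p.1 p.2 ∂(ν.prod ν) := by
        have hS : Measurable (Prod.map (Prod.snd : X × Y → Y) (id : Y → Y)) :=
          measurable_snd.prodMap measurable_id
        rw [show (ν.prod ν) = (γ.prod ν).map (Prod.map Prod.snd id) by
              rw [← Measure.map_prod_map _ _ measurable_snd measurable_id, Measure.map_id],
          lintegral_map (f := fun p : Y × Y => dY p.1 p.2) hdY hS]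
        rfl
    _ = ∫⁻ y₁, ∫⁻ y₂, dY y₁ y₂ ∂ν ∂ν := lintegral_prod _ hdY.aemeasurable
    _ ≤ diamC cY ν :=
        lintegral_mono fun y₁ => lintegral_mono fun y₂ => hle' y₁ y₂

lemma auxX {X Y : Type*} [MeasurableSpace X] [MeasurableSpace Y]
    (c : X × Y → X × Y → ℝ≥0∞)
    (hc : Measurable (Function.uncurry c))
    (cX : X → X → ℝ≥0∞) (dX : X → X → ℝ≥0∞)
    (hdX : Measurable (Function.uncurry dX))
    (hle : ∀ y x₁ x₂, c (x₁, y) (x₂, y) ≤ dX x₁ x₂)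
    (hle' : ∀ x₁ x₂, dX x₁ x₂ ≤ cX x₁ x₂)
    (γ : Measure (X × Y)) [IsProbabilityMeasure γ] :
    tdep c γ ≤ diamC cX (γ.map Prod.fst) := by
  set μ : Measure X := γ.map Prod.fst with hμ
  have hμf : μ = γ.fst := rfl
  have : IsProbabilityMeasure μ := by rw [hμf]; infer_instance
  set T : (X × Y) × X → (X × Y) × (X × Y) := fun q => (q.1, (q.2, q.1.2)) with hT
  have hTm : Measurable T :=
    measurable_fst.prodMk (measurable_snd.prodMk (measurable_snd.comp measurable_fst))
  set π : Measure ((X × Y) × (X × Y)) := (γ.prod μ).map T with hπ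
  have h1 : π.map Prod.fst = γ := by
    rw [hπ, Measure.map_map measurable_fst hTm]
    have : (Prod.fst ∘ T) = (Prod.fst : (X × Y) × X → X × Y) := rfl
    rw [this]
    exact Measure.fst_prod
  have h2 : π.map Prod.snd = (γ.map Prod.fst).prod (γ.map Prod.snd) := by
    rw [hπ, Measure.map_map measurable_snd hTm]
    have hco : (Prod.snd ∘ T) =
        (Prod.map (id : X → X) (Prod.snd : X × Y → Y)) ∘ Prod.swap := rfl
    rw [hco, ← Measure.map_map (measurable_id.prodMap measurable_snd) measurable_swap,
      Measure.prod_swap, ← Measure.map_prod_map _ _ measurable_id measurable_snd,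
      Measure.map_id]
  have key : tdep c γ ≤ ∫⁻ p, c p.1 p.2 ∂π := by
    rw [tdep, otCost]
    exact iInf_le_of_le π (iInf_le _ ⟨h1, h2⟩)
  refine key.trans ?_
  have hc' : Measurable fun p : (X × Y) × (X × Y) => c p.1 p.2 := hc
  rw [hπ, lintegral_map hc' hTm]
  calc ∫⁻ q, c (T q).1 (T q).2 ∂(γ.prod μ)
      ≤ ∫⁻ q : (X × Y) × X, dX q.1.1 q.2 ∂(γ.prod μ) := by
        refine lintegral_mono fun q => ?_
        exact hle q.1.2 q.1.1 q.2
    _ = ∫⁻ p : X × X, dX p.1 p.2 ∂(μ.prod μ) := by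
        have hS : Measurable (Prod.map (Prod.fst : X × Y → X) (id : X → X)) :=
          measurable_fst.prodMap measurable_id
        rw [show (μ.prod μ) = (γ.prod μ).map (Prod.map Prod.fst id) by
              rw [← Measure.map_prod_map _ _ measurable_fst measurable_id, Measure.map_id],
          lintegral_map (f := fun p : X × X => dX p.1 p.2) hdX hS]
        rfl
    _ = ∫⁻ x₁, ∫⁻ x₂, dX x₁ x₂ ∂μ ∂μ := lintegral_prod _ hdX.aemeasurable
    _ ≤ diamC cX μ :=
        lintegral_mono fun x₁ => lintegral_mono fun x₂ => hle' x₁ x₂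

theorem tdep_le_diam_marginals
    {X Y : Type*} [TopologicalSpace X] [PolishSpace X] [MeasurableSpace X] [BorelSpace X]
    [TopologicalSpace Y] [PolishSpace Y] [MeasurableSpace Y] [BorelSpace Y]
    (c : X × Y → X × Y → ℝ≥0∞)
    (hc_lsc : LowerSemicontinuous (Function.uncurry c))
    (hc_symm : ∀ z₁ z₂, c z₁ z₂ = c z₂ z₁)
    (hc_diag : ∀ z, c z z = 0)
    (cX : X → X → ℝ≥0∞) (cY : Y → Y → ℝ≥0∞)
    (hcX_symm : ∀ x₁ x₂, cX x₁ x₂ = cX x₂ x₁)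
    (hcY_symm : ∀ y₁ y₂, cY y₁ y₂ = cY y₂ y₁)
    (hcX_bound : ∀ x₁ x₂ y, c (x₁, y) (x₂, y) ≤ cX x₁ x₂)
    (hcY_bound : ∀ y₁ y₂ x, c (x, y₁) (x, y₂) ≤ cY y₁ y₂)
    (γ : Measure (X × Y)) [IsProbabilityMeasure γ] :
    tdep c γ ≤ diamC cY (γ.map Prod.snd) ∧ tdep c γ ≤ diamC cX (γ.map Prod.fst) := by
  have hcm : Measurable (Function.uncurry c) := hc_lsc.measurable
  set dY : Y → Y → ℝ≥0∞ := fun y₁ y₂ => ⨆ x, c (x, y₁) (x, y₂) with hdYdef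
  set dX : X → X → ℝ≥0∞ := fun x₁ x₂ => ⨆ y, c (x₁, y) (x₂, y) with hdXdef
  have hdY_lsc : LowerSemicontinuous (Function.uncurry dY) := by
    have : ∀ x : X, LowerSemicontinuous
        (fun p : Y × Y => Function.uncurry c ((x, p.1), (x, p.2))) := fun x =>
      LowerSemicontinuous.comp hc_lsc
        (((continuous_const.prodMk continuous_fst)).prodMk
          (continuous_const.prodMk continuous_snd))
    exact lowerSemicontinuous_iSup this
  have hdX_lsc : LowerSemicontinuous (Function.uncurry dX) := by
    have : ∀ y : Y, LowerSemicontinuous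
        (fun p : X × X => Function.uncurry c ((p.1, y), (p.2, y))) := fun y =>
      LowerSemicontinuous.comp hc_lsc
        (((continuous_fst.prodMk continuous_const)).prodMk
          (continuous_snd.prodMk continuous_const))
    exact lowerSemicontinuous_iSup this
  constructor
  · exact auxY c hcm cY dY hdY_lsc.measurable
      (fun x y₁ y₂ => le_iSup (fun x => c (x, y₁) (x, y₂)) x)
      (fun y₁ y₂ => iSup_le fun x => hcY_bound y₁ y₂ x) γ
  · exact auxX c hcm cX dX hdX_lsc.measurable
      (fun y x₁ x₂ => le_iSup (fun y => c (x₁, y) (x₂, y)) y)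
      (fun x₁ x₂ => iSup_le fun y => hcX_bound x₁ x₂ y) γ
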